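/- Let G be a locally compact Hausdorff topological group with a Haar measure and let Γ ⊆ G be a discrete subgroup. Then there exists a fundamental domain for Γ, i.e., an open set F ⊆ G such that: (i) F ∩ γF = ∅ for every γ ∈ Γ ∖ {1}; (ii) Γ·cl(F) = G, where cl(F) denotes the topological closure of F; (iii) for every compact set C ⊆ G, the set C ∩ Γ·(cl(F) ∖ F) has Haar measure zero. -/

import Mathlib

open MeasureTheory
open scoped Pointwise

set_option linter.unusedSectionVars false
set_option maxHeartbeats 2000000

section FundamentalDomainAux

variable {G : Type*} [Group G] [TopologicalSpace G] [IsTopologicalGroup G]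
    [LocallyCompactSpace G] [T2Space G] [MeasurableSpace G] [BorelSpace G]
    {μ : Measure G} [μ.IsHaarMeasure] {Γ : Subgroup G}

/-- Power of a set containing 1 is monotone. -/
lemma pow_subset_pow_succ {K : Set G} (h1 : (1:G) ∈ K) (n : ℕ) : K ^ n ⊆ K ^ (n+1) := by
  intro a ha
  rw [pow_succ]
  exact ⟨a, ha, 1, h1, mul_one a⟩

lemma pow_subset_pow {K : Set G} (h1 : (1:G) ∈ K) {n n' : ℕ} (h : n ≤ n') : K ^ n ⊆ K ^ n' := by
  induction h with
  | refl => exact le_refl _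
  | step _ ih => exact ih.trans (pow_subset_pow_succ h1 _)

lemma one_mem_pow {K : Set G} (h1 : (1:G) ∈ K) (n : ℕ) : (1:G) ∈ K ^ n := by
  induction n with
  | zero => simp [Set.mem_one]
  | succ n ih => rw [pow_succ]; exact ⟨1, ih, 1, h1, mul_one 1⟩

lemma inv_pow_eq {K : Set G} (hs : K⁻¹ = K) (n : ℕ) : (K ^ n)⁻¹ = K ^ n := by
  induction n with
  | zero => simp
  | succ n ih => rw [pow_succ, mul_inv_rev, hs, ih, ← pow_succ', pow_succ]

lemma isCompact_pow {K : Set G} (hK : IsCompact K) (n : ℕ) : IsCompact (K ^ n) := by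
  induction n with
  | zero => rw [pow_zero, ← Set.singleton_one]; exact isCompact_singleton
  | succ n ih => rw [pow_succ]; exact ih.mul hK

lemma gamma_inter_compact_finite (hdisc : DiscreteTopology ↥Γ) {C : Set G} (hC : IsCompact C) :
    ((Γ : Set G) ∩ C).Finite := by
  have hcl : IsClosed (Γ : Set G) := Subgroup.isClosed_of_discrete
  have hcomp : IsCompact ((Γ : Set G) ∩ C) := hC.inter_left hcl
  have : DiscreteTopology ↥((Γ : Set G) ∩ C) :=
    DiscreteTopology.of_subset hdisc Set.inter_subset_left
  exact hcomp.finite (isDiscrete_iff_discreteTopology.mpr this)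

lemma measure_image_mul (γ : G) (A : Set G) : μ ((γ * ·) '' A) = μ A := by
  rw [Set.image_mul_left, measure_preimage_mul]

lemma satnull (hdisc : DiscreteTopology ↥Γ) {P : Set G} (hPc : IsCompact (closure P))
    (hP0 : μ (closure P \ P) = 0) {C : Set G} (hC : IsCompact C) :
    μ (((Γ : Set G) * (closure P \ P)) ∩ C) = 0 := by
  have key : ((Γ : Set G) * (closure P \ P)) ∩ C ⊆
      ⋃ γ ∈ (Γ : Set G) ∩ (C * (closure P)⁻¹), (γ * ·) '' (closure P \ P) := by
    rintro x ⟨hx, hxC⟩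
    obtain ⟨γ, hγ, b, hb, rfl⟩ := Set.mem_mul.1 hx
    refine Set.mem_biUnion ⟨hγ, ⟨γ * b, hxC, b⁻¹, ?_, by group⟩⟩ ⟨b, hb, rfl⟩
    exact Set.inv_mem_inv.2 hb.1
  have hfin := gamma_inter_compact_finite hdisc (hC.mul hPc.inv)
  refine le_antisymm ((measure_mono key).trans ?_) zero_le
  rw [(measure_biUnion_null_iff hfin.countable).2]
  intro γ _
  rw [measure_image_mul]
  exact hP0

lemma exists_candidate (hdisc : DiscreteTopology ↥Γ) (μ : Measure G) [μ.IsHaarMeasure]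
    {g : G} {N : Set G} (hN : IsOpen N) (hg : g ∈ N) :
    ∃ O : Set G, IsOpen O ∧ g ∈ O ∧ IsCompact (closure O) ∧ closure O ⊆ N ∧
      (∀ γ ∈ Γ, γ ≠ (1:G) → ((γ * ·) '' O) ∩ O = ∅) ∧ μ (closure O \ O) = 0 := by
  obtain ⟨K, hKc, hgK, hKN⟩ := exists_compact_subset hN hg
  set bad : Set G := ((Γ : Set G) ∩ (K * K⁻¹)) \ {1} with hbad
  have hbadfin : bad.Finite :=
    ((gamma_inter_compact_finite hdisc (hKc.mul hKc.inv)).subset Set.diff_subset)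
  have hsep : ∀ γ : G, ∃ T : Set G, IsOpen T ∧ g ∈ T ∧
      (γ ∈ bad → ((γ * ·) '' T) ∩ T = ∅) := by
    intro γ
    by_cases hγ : γ ∈ bad
    · have hne : γ * g ≠ g := by
        intro h
        exact hγ.2 (by simpa using mul_right_cancel (h.trans (one_mul g).symm))
      obtain ⟨U, Vv, hU, hV, hgU, hgV, hUV⟩ := t2_separation hne
      refine ⟨Vv ∩ (γ * ·) ⁻¹' U, hV.inter (hU.preimage (continuous_mul_left γ)),
        ⟨hgV, by simpa using hgU⟩, fun _ => ?_⟩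
      apply Set.eq_empty_iff_forall_notMem.2
      rintro x ⟨⟨y, hy, rfl⟩, hx2⟩
      exact Set.disjoint_left.1 hUV hy.2 hx2.1
    · exact ⟨Set.univ, isOpen_univ, trivial, fun h => absurd h hγ⟩
  choose T hTopen hTg hTdisj using hsep
  set W : Set G := interior K ∩ ⋂ γ ∈ bad, T γ with hW
  have hWopen : IsOpen W :=
    isOpen_interior.inter (hbadfin.isOpen_biInter (fun γ _ => hTopen γ))
  have hgW : g ∈ W := ⟨hgK, Set.mem_biInter (fun γ _ => hTg γ)⟩
  obtain ⟨f, hf1, hf0, hfc, hf01⟩ := exists_continuous_one_zero_of_isCompact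
    (isCompact_singleton : IsCompact {g}) hWopen.isClosed_compl
    (by simpa using Set.singleton_subset_iff.2 hgW)
  -- choose a good level t
  haveI : Fact (μ (tsupport f) < ⊤) := ⟨hfc.measure_lt_top⟩
  set ν : Measure G := μ.restrict (tsupport f) with hν
  have key := Measure.countable_meas_level_set_pos (μ := ν) f.continuous.measurable
  have aux := measure_diff_null (s := Set.Ioo (0:ℝ) 1) (Set.Countable.measure_zero key volume)
  have len_pos : (0:ENNReal) < ENNReal.ofReal (1 - 0) := by norm_num
  rw [← Real.volume_Ioo, ← aux] at len_pos
  obtain ⟨t, ⟨ht01, htν⟩⟩ := nonempty_of_measure_ne_zero len_pos.ne.symm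
  have htnull : ν {x | f x = t} = 0 := by
    by_contra h
    exact htν (pos_iff_ne_zero.2 h)
  have hlevel_sub : {x | f x = t} ⊆ tsupport f := by
    intro x hx
    apply subset_tsupport
    simp only [Function.mem_support]
    rw [Set.mem_setOf_eq] at hx
    rw [hx]; exact ne_of_gt ht01.1
  have htnullμ : μ {x | f x = t} = 0 := by
    have hmeas : MeasurableSet {x | f x = t} :=
      ((isClosed_singleton.preimage f.continuous).measurableSet)
    rw [hν, Measure.restrict_apply hmeas, Set.inter_eq_self_of_subset_left hlevel_sub] at htnull
    exact htnull
  set O : Set G := f ⁻¹' Set.Ioi t with hO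
  have hOcl : closure O ⊆ {x | t ≤ f x} :=
    closure_minimal (fun x hx => le_of_lt (Set.mem_preimage.1 hx)) (isClosed_Ici.preimage f.continuous)
  have hOW : closure O ⊆ W := by
    intro x hx
    by_contra hxW
    have h0 : f x = 0 := hf0 hxW
    have := hOcl hx
    rw [Set.mem_setOf_eq, h0] at this
    exact absurd (lt_of_lt_of_le ht01.1 this) (lt_irrefl 0)
  have hOK : closure O ⊆ K := hOW.trans (Set.inter_subset_left.trans interior_subset)
  refine ⟨O, isOpen_Ioi.preimage f.continuous, ?_, ?_, ?_, ?_, ?_⟩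
  · have : f g = 1 := hf1 rfl
    simp only [hO, Set.mem_preimage, Set.mem_Ioi, this]
    exact ht01.2
  · exact hKc.of_isClosed_subset isClosed_closure hOK
  · exact hOK.trans hKN
  · intro γ hγΓ hγ1
    apply Set.eq_empty_iff_forall_notMem.2
    rintro x ⟨⟨y, hyO, rfl⟩, hxO⟩
    have hyW : y ∈ W := hOW (subset_closure hyO)
    have hxW : γ * y ∈ W := hOW (subset_closure hxO)
    have hγbad : γ ∈ bad := by
      refine ⟨⟨hγΓ, ⟨γ * y, interior_subset (Set.inter_subset_left hxW), y⁻¹, ?_, by group⟩⟩, hγ1⟩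
      · exact Set.inv_mem_inv.2 (interior_subset (Set.inter_subset_left hyW))
    have hdisj := hTdisj γ hγbad
    have hTsub : W ⊆ T γ := fun z hz => (Set.mem_iInter₂.1 hz.2) γ hγbad
    exact Set.eq_empty_iff_forall_notMem.1 hdisj (γ * y)
      ⟨⟨y, hTsub hyW, rfl⟩, hTsub hxW⟩
  · refine measure_mono_null ?_ htnullμ
    intro x hx
    exact le_antisymm (not_lt.1 (fun h => hx.2 h)) (hOcl hx.1)

/-- Trimming a list of candidate sets against a growing closed "used" region. -/
def trimL (S : Set G) : Set G → List (Set G) → List (Set G)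
  | _, [] => []
  | A, O :: tl => (O \ A) :: trimL S (A ∪ S * closure (O \ A)) tl

/-- Properties of a piece. -/
def PieceP (μ : Measure G) (Γ : Subgroup G) (R X P : Set G) : Prop :=
  IsOpen P ∧ IsCompact (closure P) ∧ closure P ⊆ R ∧ closure P ∩ X = ∅ ∧
    (∀ γ ∈ Γ, γ ≠ (1:G) → ((γ * ·) '' P) ∩ P = ∅) ∧ μ (closure P \ P) = 0

lemma trim_spec (hdisc : DiscreteTopology ↥Γ) (μ : Measure G) [μ.IsHaarMeasure]
    {R X : Set G} :
    ∀ (l : List (Set G)) (A : Set G), IsClosed A →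
    (∀ C : Set G, IsCompact C → μ (frontier A ∩ C) = 0) →
    (∀ O ∈ l, PieceP μ Γ R X O) →
    (∀ P ∈ trimL (Γ : Set G) A l, PieceP μ Γ R X P ∧ P ∩ A = ∅) ∧
    List.Pairwise (fun P Q => Q ∩ ((Γ : Set G) * closure P) = ∅) (trimL (Γ : Set G) A l) ∧
    (∀ O ∈ l, O ⊆ A ∪ ⋃ P ∈ {P | P ∈ trimL (Γ : Set G) A l}, (Γ : Set G) * closure P) := by
  intro l
  induction l with
  | nil => intro A hA hAfr hl; simp [trimL]
  | cons O tl ih =>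
    intro A hA hAfr hl
    obtain ⟨hOopen, hOc, hOR, hOX, hOinj, hOnull⟩ := hl O (List.mem_cons_self (a := O) (l := tl))
    set P₀ : Set G := O \ A with hP₀
    have hP₀open : IsOpen P₀ := hOopen.sdiff hA
    have hP₀cl : closure P₀ ⊆ closure O := closure_mono Set.diff_subset
    have hP₀c : IsCompact (closure P₀) := hOc.of_isClosed_subset isClosed_closure hP₀cl
    have hP₀sub : closure P₀ \ P₀ ⊆ (closure O \ O) ∪ (frontier A ∩ closure O) := by
      rintro x ⟨hx1, hx2⟩
      by_cases hxO : x ∈ O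
      · have hxA : x ∈ A := by
          by_contra hxA
          exact hx2 ⟨hxO, hxA⟩
        have hxint : x ∉ interior A := by
          have : x ∈ closure (Aᶜ) := closure_mono (fun y hy => hy.2) hx1
          rw [closure_compl] at this
          exact this
        exact Or.inr ⟨by rw [hA.frontier_eq]; exact ⟨hxA, hxint⟩, hP₀cl hx1⟩
      · exact Or.inl ⟨hP₀cl hx1, hxO⟩
    have hP₀null : μ (closure P₀ \ P₀) = 0 := by
      refine measure_mono_null hP₀sub (measure_union_null ?_ ?_)
      · exact hOnull
      · exact hAfr (closure O) hOc
    have hP₀P : PieceP μ Γ R X P₀ ∧ P₀ ∩ A = ∅ := by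
      refine ⟨⟨hP₀open, hP₀c, hP₀cl.trans hOR, ?_, ?_, hP₀null⟩, ?_⟩
      · exact Set.eq_empty_of_subset_empty ((Set.inter_subset_inter_left X hP₀cl).trans hOX.subset)
      · intro γ hγ h1
        refine Set.eq_empty_of_subset_empty (Set.Subset.trans ?_ (hOinj γ hγ h1).subset)
        exact Set.inter_subset_inter (Set.image_mono Set.diff_subset) Set.diff_subset
      · exact Set.eq_empty_iff_forall_notMem.2 (fun x hx => hx.1.2 hx.2)
    -- new used region
    set A' : Set G := A ∪ (Γ : Set G) * closure P₀ with hA'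
    have hstar_closed : IsClosed ((Γ : Set G) * closure P₀) :=
      IsClosed.mul_right_of_isCompact Subgroup.isClosed_of_discrete hP₀c
    have hA'cl : IsClosed A' := hA.union hstar_closed
    have hfrB : frontier ((Γ : Set G) * closure P₀) ⊆ (Γ : Set G) * (closure P₀ \ P₀) := by
      intro x hx
      have hxB : x ∈ (Γ : Set G) * closure P₀ := hstar_closed.frontier_subset hx
      have hxint : x ∉ (Γ : Set G) * P₀ := by
        intro hmem
        have : x ∈ interior ((Γ : Set G) * closure P₀) :=
          interior_maximal (Set.mul_subset_mul_left subset_closure) (hP₀open.mul_left) hmem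
        exact hx.2 this
      obtain ⟨γ, hγ, b, hb, rfl⟩ := Set.mem_mul.1 hxB
      refine ⟨γ, hγ, b, ⟨hb, fun hbP => hxint ⟨γ, hγ, b, hbP, rfl⟩⟩, rfl⟩
    have hA'fr : ∀ C : Set G, IsCompact C → μ (frontier A' ∩ C) = 0 := by
      intro C hC
      have hfrsub : frontier A' ⊆ frontier A ∪ frontier ((Γ : Set G) * closure P₀) :=
        (frontier_union_subset A _).trans
          (Set.union_subset_union Set.inter_subset_left Set.inter_subset_right)
      refine measure_mono_null (Set.inter_subset_inter_left C hfrsub) ?_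
      rw [Set.union_inter_distrib_right]
      refine measure_union_null (hAfr C hC) ?_
      refine measure_mono_null (Set.inter_subset_inter_left C hfrB) ?_
      exact satnull hdisc hP₀c hP₀null hC
    have htl : ∀ O' ∈ tl, PieceP μ Γ R X O' := fun O' h => hl O' (List.mem_cons_of_mem _ h)
    obtain ⟨ih1, ih2, ih3⟩ := ih A' hA'cl hA'fr htl
    have htrim_eq : trimL (Γ : Set G) A (O :: tl) = P₀ :: trimL (Γ : Set G) A' tl := rfl
    refine ⟨?_, ?_, ?_⟩
    · intro P hP
      rw [htrim_eq, List.mem_cons] at hP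
      rcases hP with rfl | hP
      · exact hP₀P
      · obtain ⟨h1, h2⟩ := ih1 P hP
        exact ⟨h1, Set.eq_empty_of_subset_empty
          ((Set.inter_subset_inter_right P (Set.subset_union_left)).trans h2.subset)⟩
    · rw [htrim_eq]
      refine List.Pairwise.cons ?_ ih2
      intro Q hQ
      have h2 := (ih1 Q hQ).2
      refine Set.eq_empty_of_subset_empty (Set.Subset.trans ?_ h2.subset)
      exact Set.inter_subset_inter_right Q (Set.subset_union_right)
    · intro O' hO'
      rcases List.mem_cons.1 hO' with rfl | hO'
      · intro x hx
        by_cases hxA : x ∈ A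
        · exact Or.inl hxA
        · refine Or.inr ?_
          refine Set.mem_biUnion (by rw [htrim_eq]; exact List.mem_cons_self) ?_
          exact ⟨1, Subgroup.one_mem Γ, x, subset_closure ⟨hx, hxA⟩, one_mul x⟩
      · intro x hx
        rcases ih3 O' hO' hx with h | h
        · rcases h with h | h
          · exact Or.inl h
          · refine Or.inr (Set.mem_biUnion (by rw [htrim_eq]; exact List.mem_cons_self) h)
        · obtain ⟨P, hP, hxP⟩ := Set.mem_iUnion₂.1 h
          refine Or.inr (Set.mem_biUnion (by rw [htrim_eq]; exact List.mem_cons_of_mem _ hP) hxP)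

/-- Forbidden zone for stage-k pieces. -/
def Xzone (Γ : Subgroup G) (K : Set G) (r : G) (k : ℕ) : Set G :=
  if k = 0 then ∅ else (Γ : Set G) * ({r} * K ^ (k-1))

/-- Invariant for the per-block construction after `n` stages. -/
def BInv (μ : Measure G) (Γ : Subgroup G) (K : Set G) (r : G) (n : ℕ)
    (bs : List (List (Set G))) : Prop :=
  bs.length = n ∧
  (∀ k, ∀ P ∈ bs.getD k [], PieceP μ Γ ({r} * K ^ (k+2)) (Xzone Γ K r k) P) ∧
  (∀ k, (bs.getD k []).Pairwise (fun P Q => Q ∩ ((Γ : Set G) * closure P) = ∅)) ∧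
  (∀ k k', k < k' → ∀ P ∈ bs.getD k [], ∀ Q ∈ bs.getD k' [], Q ∩ ((Γ : Set G) * closure P) = ∅) ∧
  (∀ m, 1 ≤ m → m ≤ n →
    {r} * K ^ m ⊆ ⋃ k, ⋃ P ∈ {P | P ∈ bs.getD k []}, (Γ : Set G) * closure P)

lemma step_lemma (hdisc : DiscreteTopology ↥Γ) (μ : Measure G) [μ.IsHaarMeasure]
    {K : Set G} (hKc : IsCompact K) (h1K : (1:G) ∈ interior K) (r : G) {n : ℕ}
    {bs : List (List (Set G))} (hinv : BInv μ Γ K r n bs) :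
    ∃ new : List (Set G), BInv μ Γ K r (n+1) (bs ++ [new]) := by
  classical
  obtain ⟨hlen, hP, hpair, hcross, hcov⟩ := hinv
  have h1K' : (1:G) ∈ K := interior_subset h1K
  set E : Set G := ⋃ k, ⋃ P ∈ {P | P ∈ bs.getD k []}, (Γ : Set G) * closure P with hE
  -- pieces of the previous stages
  set J : Set (Set G) := {P | ∃ k, P ∈ bs.getD k []} with hJ
  have hJfin : J.Finite := by
    refine (bs.flatten.finite_toSet).subset ?_
    rintro P ⟨k, hk⟩
    have hklt : k < bs.length := by
      by_contra h
      rw [List.getD_eq_default _ _ (not_lt.1 h)] at hk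
      exact absurd hk (List.not_mem_nil (a := P))
    rw [List.getD_eq_getElem _ _ hklt] at hk
    refine List.mem_flatten.2 ⟨bs[k], ?_, hk⟩
    exact List.getElem_mem hklt
  have hEeq : E = ⋃ P ∈ J, (Γ : Set G) * closure P := by
    apply Set.Subset.antisymm
    · refine Set.iUnion_subset fun k => Set.iUnion₂_subset fun P hPk => ?_
      exact Set.subset_biUnion_of_mem (u := fun P => (Γ : Set G) * closure P) (show P ∈ J from ⟨k, hPk⟩)
    · refine Set.iUnion₂_subset fun P hPJ => ?_
      obtain ⟨k, hk⟩ := hPJ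
      exact (Set.subset_biUnion_of_mem (u := fun P => (Γ : Set G) * closure P) hk).trans
        (Set.subset_iUnion (fun k => ⋃ P ∈ {P | P ∈ bs.getD k []}, (Γ : Set G) * closure P) k)
  have hJP : ∀ P ∈ J, IsCompact (closure P) ∧ μ (closure P \ P) = 0 ∧ IsOpen P := by
    rintro P ⟨k, hk⟩
    exact ⟨(hP k P hk).2.1, (hP k P hk).2.2.2.2.2, (hP k P hk).1⟩
  have hEclosed : IsClosed E := by
    rw [hEeq]
    refine Set.Finite.isClosed_biUnion hJfin fun P hPJ => ?_
    exact IsClosed.mul_right_of_isCompact Subgroup.isClosed_of_discrete (hJP P hPJ).1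
  have hEsat : ∀ γ ∈ Γ, ∀ x ∈ E, γ * x ∈ E := by
    intro γ hγ x hx
    rw [hEeq] at hx ⊢
    obtain ⟨P, hPJ, hxP⟩ := Set.mem_iUnion₂.1 hx
    obtain ⟨δ, hδ, c, hc, rfl⟩ := Set.mem_mul.1 hxP
    exact Set.mem_biUnion hPJ ⟨γ * δ, mul_mem hγ hδ, c, hc, mul_assoc γ δ c⟩
  have hEfr : ∀ C : Set G, IsCompact C → μ (frontier E ∩ C) = 0 := by
    intro C hC
    have hsub : frontier E ⊆ ⋃ P ∈ J, (Γ : Set G) * (closure P \ P) := by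
      intro x hx
      have hxE : x ∈ E := hEclosed.frontier_subset hx
      rw [hEeq] at hxE
      obtain ⟨P, hPJ, hxP⟩ := Set.mem_iUnion₂.1 hxE
      have hxint : x ∉ (Γ : Set G) * P := by
        intro hmem
        apply hx.2
        refine interior_maximal ?_ ((hJP P hPJ).2.2.mul_left) hmem
        refine (Set.mul_subset_mul_left subset_closure).trans ?_
        rw [hEeq]; exact Set.subset_biUnion_of_mem (u := fun P => (Γ : Set G) * closure P) hPJ
      obtain ⟨γ, hγ, b, hb, rfl⟩ := Set.mem_mul.1 hxP
      exact Set.mem_biUnion hPJ ⟨γ, hγ, b, ⟨hb, fun h => hxint ⟨γ, hγ, b, h, rfl⟩⟩, rfl⟩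
    refine measure_mono_null (Set.inter_subset_inter_left C hsub) ?_
    rw [Set.iUnion₂_inter]
    refine (measure_biUnion_null_iff hJfin.countable).2 fun P hPJ => ?_
    exact satnull hdisc (hJP P hPJ).1 (hJP P hPJ).2.1 hC
  -- the compact region to cover at this stage
  have hCcompact : IsCompact ({r} * K ^ (n+1)) := isCompact_singleton.mul (isCompact_pow hKc _)
  set D : Set G := closure (({r} * K ^ (n+1)) \ E) with hD
  have hDc : IsCompact D :=
    hCcompact.of_isClosed_subset isClosed_closure
      (closure_minimal Set.diff_subset hCcompact.isClosed)
  -- the allowed open region for new pieces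
  set R' : Set G := ({r} * K ^ (n+1)) * interior K with hR'
  have hR'open : IsOpen R' := IsOpen.mul_left isOpen_interior
  have hR'sub : R' ⊆ {r} * K ^ (n+2) := by
    rw [hR', pow_succ (K) (n+1), ← mul_assoc]
    exact Set.mul_subset_mul_left interior_subset
  set Y : Set G := if n = 0 then Set.univ else ((Γ : Set G) * ({r} * K ^ (n-1)))ᶜ with hY
  have hYopen : IsOpen Y := by
    rw [hY]
    split
    · exact isOpen_univ
    · refine (IsClosed.mul_right_of_isCompact Subgroup.isClosed_of_discrete ?_).isOpen_compl
      exact isCompact_singleton.mul (isCompact_pow hKc _)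
  have hDY : D ⊆ Y := by
    rw [hY]
    split
    · exact fun x _ => trivial
    · next hn =>
      have hn1 : 1 ≤ n := Nat.one_le_iff_ne_zero.2 hn
      -- the forbidden zone is inside the interior of E
      have hzone : (Γ : Set G) * ({r} * K ^ (n-1)) ⊆ interior E := by
        have hopen : IsOpen (((Γ : Set G) * ({r} * K ^ (n-1))) * interior K) :=
          IsOpen.mul_left isOpen_interior
        have hsubE : ((Γ : Set G) * ({r} * K ^ (n-1))) * interior K ⊆ E := by
          have h1 : ({r} * K ^ (n-1)) * interior K ⊆ {r} * K ^ n := by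
            rw [mul_assoc]
            refine Set.mul_subset_mul_left ?_
            intro a ha
            obtain ⟨b, hb, c, hc, rfl⟩ := Set.mem_mul.1 ha
            have : b * c ∈ K ^ (n-1) * K := ⟨b, hb, c, interior_subset hc, rfl⟩
            rw [← pow_succ] at this
            have hn' : n - 1 + 1 = n := Nat.succ_pred_eq_of_pos hn1
            rwa [hn'] at this
          have h2 : {r} * K ^ n ⊆ E := hcov n hn1 le_rfl
          intro x hx
          rw [mul_assoc] at hx
          obtain ⟨γ, hγ, c, hc, rfl⟩ := Set.mem_mul.1 hx
          exact hEsat γ hγ c (h2 (h1 hc))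
        refine Set.Subset.trans ?_ (interior_maximal hsubE hopen)
        intro x hx
        exact ⟨x, hx, 1, h1K, mul_one x⟩
      intro x hxD
      have : x ∈ closure Eᶜ := closure_mono (fun y hy => hy.2) hxD
      rw [closure_compl] at this
      exact fun hmem => this (hzone hmem)
  -- candidates at every point of D
  have hcand : ∀ x : G, ∃ O : Set G, IsOpen O ∧ PieceP μ Γ R' (Xzone Γ K r n) O ∧
      (x ∈ D → x ∈ O) := by
    intro x
    by_cases hx : x ∈ D
    · have hxR' : x ∈ R' := by
        have : x ∈ {r} * K ^ (n+1) :=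
          closure_minimal Set.diff_subset hCcompact.isClosed hx
        exact ⟨x, this, 1, h1K, mul_one x⟩
      obtain ⟨O, hO1, hO2, hO3, hO4, hO5, hO6⟩ :=
        exists_candidate hdisc μ (hR'open.inter hYopen) ⟨hxR', hDY hx⟩
      refine ⟨O, hO1, ⟨hO1, hO3, hO4.trans Set.inter_subset_left, ?_, hO5, hO6⟩, fun _ => hO2⟩
      · rw [Xzone]
        split
        · exact Set.inter_empty _
        · next hn =>
          apply Set.eq_empty_iff_forall_notMem.2
          rintro z ⟨hz1, hz2⟩
          have : z ∈ Y := (hO4.trans Set.inter_subset_right) hz1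
          rw [hY, if_neg hn] at this
          exact this hz2
    · refine ⟨∅, isOpen_empty, ⟨isOpen_empty, by simp, by simp, by simp, by simp, by simp⟩,
        fun h => absurd h hx⟩
  choose O hOopen hOP hOmem using hcand
  obtain ⟨t, ht⟩ := hDc.elim_finite_subcover O hOopen (fun x hx => Set.mem_iUnion.2 ⟨x, hOmem x hx⟩)
  set l : List (Set G) := t.toList.map O with hl
  have hlP : ∀ O' ∈ l, PieceP μ Γ R' (Xzone Γ K r n) O' := by
    intro O' hO'
    obtain ⟨x, _, rfl⟩ := List.mem_map.1 hO'
    exact hOP x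
  obtain ⟨tr1, tr2, tr3⟩ := trim_spec hdisc μ l E hEclosed hEfr hlP
  set new : List (Set G) := trimL (Γ : Set G) E l with hnew
  have g1 : ∀ k, k < n → (bs ++ [new]).getD k [] = bs.getD k [] := by
    intro k hk
    exact List.getD_append _ _ _ _ (by omega)
  have g2 : (bs ++ [new]).getD n [] = new := by
    rw [List.getD_append_right _ _ _ _ (by omega)]
    simp [hlen]
  have g3 : ∀ k, n < k → (bs ++ [new]).getD k [] = [] := by
    intro k hk
    refine List.getD_eq_default _ _ ?_
    simp [hlen]
    omega
  have hbsn : bs.getD n [] = [] := List.getD_eq_default _ _ (by omega)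
  have hsubsets : ∀ k, ∀ P, P ∈ bs.getD k [] → P ∈ (bs ++ [new]).getD k [] := by
    intro k P hPk
    rcases lt_trichotomy k n with h | h | h
    · rw [g1 k h]; exact hPk
    · subst h; rw [hbsn] at hPk; exact absurd hPk (List.not_mem_nil (a := P))
    · rw [List.getD_eq_default _ _ (by omega : bs.length ≤ k)] at hPk
      exact absurd hPk (List.not_mem_nil (a := P))
  have hEsub : ∀ {P : Set G}, P ∈ J → (Γ : Set G) * closure P ⊆ E := by
    intro P hPJ
    rw [hEeq]
    exact Set.subset_biUnion_of_mem (u := fun P => (Γ : Set G) * closure P) hPJ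
  refine ⟨new, ?_, ?_, ?_, ?_, ?_⟩
  · simp [hlen]
  · intro k
    rcases lt_trichotomy k n with h | h | h
    · rw [g1 k h]; exact hP k
    · subst h
      rw [g2]
      intro P hPmem
      obtain ⟨⟨q1, q2, q3, q4, q5, q6⟩, _⟩ := tr1 P hPmem
      exact ⟨q1, q2, q3.trans hR'sub, q4, q5, q6⟩
    · rw [g3 k h]; intro P hPmem; exact absurd hPmem (List.not_mem_nil (a := P))
  · intro k
    rcases lt_trichotomy k n with h | h | h
    · rw [g1 k h]; exact hpair k
    · subst h; rw [g2]; exact tr2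
    · rw [g3 k h]; exact List.Pairwise.nil
  · intro k k' hkk' P hPk Q hQk'
    rcases lt_trichotomy k' n with h | h | h
    · rw [g1 k' h] at hQk'
      rw [g1 k (hkk'.trans h)] at hPk
      exact hcross k k' hkk' P hPk Q hQk'
    · subst h
      rw [g1 k hkk'] at hPk
      rw [g2] at hQk'
      have hQE : Q ∩ E = ∅ := (tr1 Q hQk').2
      refine Set.eq_empty_of_subset_empty (Set.Subset.trans ?_ hQE.subset)
      exact Set.inter_subset_inter_right Q (hEsub ⟨k, hPk⟩)
    · rw [g3 k' h] at hQk'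
      exact absurd hQk' (List.not_mem_nil (a := Q))
  · intro m hm1 hmn1
    have hinj : E ⊆ ⋃ k, ⋃ P ∈ {P | P ∈ (bs ++ [new]).getD k []}, (Γ : Set G) * closure P := by
      intro x hx
      obtain ⟨k, hk⟩ := Set.mem_iUnion.1 hx
      obtain ⟨P, hPk, hxP⟩ := Set.mem_iUnion₂.1 hk
      exact Set.mem_iUnion.2 ⟨k, Set.mem_biUnion (hsubsets k P hPk) hxP⟩
    by_cases hm : m ≤ n
    · exact (hcov m hm1 hm).trans hinj
    · have hmeq : m = n + 1 := by omega
      subst hmeq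
      intro x hx
      by_cases hxE : x ∈ E
      · exact hinj hxE
      · have hxD : x ∈ D := subset_closure ⟨hx, hxE⟩
        obtain ⟨x', hx't, hxO⟩ := Set.mem_iUnion₂.1 (ht hxD)
        have hOl : O x' ∈ l := List.mem_map.2 ⟨x', Finset.mem_toList.2 hx't, rfl⟩
        rcases tr3 (O x') hOl hxO with h | h
        · exact absurd h hxE
        · obtain ⟨P, hPtrim, hxP⟩ := Set.mem_iUnion₂.1 h
          refine Set.mem_iUnion.2 ⟨n, Set.mem_biUnion ?_ hxP⟩
          rw [Set.mem_setOf_eq, g2]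
          exact hPtrim

lemma piecep_empty {R X : Set G} : PieceP μ Γ R X ∅ := by
  refine ⟨isOpen_empty, by simp, by simp, by simp, by simp, by simp⟩

lemma block_exists (hdisc : DiscreteTopology ↥Γ) (μ : Measure G) [μ.IsHaarMeasure]
    {K : Set G} (hKc : IsCompact K) (h1K : (1:G) ∈ interior K) (r : G) :
    ∃ pc : ℕ → ℕ → Set G,
      (∀ m i, PieceP μ Γ ({r} * K ^ (m+2)) (Xzone Γ K r m) (pc m i)) ∧
      (∀ m i j, i < j → pc m j ∩ ((Γ : Set G) * closure (pc m i)) = ∅) ∧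
      (∀ m m', m < m' → ∀ i j, pc m' j ∩ ((Γ : Set G) * closure (pc m i)) = ∅) ∧
      (∀ m, {i | pc m i ≠ ∅}.Finite) ∧
      (∀ mm, 1 ≤ mm → {r} * K ^ mm ⊆ ⋃ m, ⋃ i, (Γ : Set G) * closure (pc m i)) := by
  classical
  have base : BInv μ Γ K r 0 [] := by
    refine ⟨rfl, ?_, ?_, ?_, ?_⟩
    · intro k P hP; simp at hP
    · intro k; simp
    · intro k k' _ P hP; simp at hP
    · intro m hm1 hm0; omega
  let chain : ∀ n : ℕ, {bs : List (List (Set G)) // BInv μ Γ K r n bs} :=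
    fun n => Nat.rec ⟨[], base⟩
      (fun _ p => ⟨p.1 ++ [Classical.choose (step_lemma hdisc μ hKc h1K r p.2)],
        Classical.choose_spec (step_lemma hdisc μ hKc h1K r p.2)⟩) n
  have hchain_len : ∀ n, (chain n).1.length = n := fun n => (chain n).2.1
  have hchain_succ : ∀ n, ∃ new, (chain (n+1)).1 = (chain n).1 ++ [new] := by
    intro n
    exact ⟨_, rfl⟩
  -- stability of getD
  have hstab : ∀ n m, m < n → (chain n).1.getD m [] = (chain (m+1)).1.getD m [] := by
    intro n
    induction n with
    | zero => intro m hm; omega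
    | succ n ih =>
      intro m hm
      rcases Nat.lt_succ_iff_lt_or_eq.1 hm with h | h
      · obtain ⟨new, hnew⟩ := hchain_succ n
        rw [hnew, List.getD_append _ _ _ _ (by rw [hchain_len]; omega)]
        exact ih m h
      · subst h; rfl
  set batch : ℕ → List (Set G) := fun m => (chain (m+1)).1.getD m [] with hbatch
  set pc : ℕ → ℕ → Set G := fun m i => (batch m).getD i ∅ with hpc
  have hpc_mem : ∀ m i, pc m i = ∅ ∨ pc m i ∈ batch m := by
    intro m i
    by_cases h : i < (batch m).length
    · right
      rw [hpc]
      simp only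
      rw [List.getD_eq_getElem _ _ h]
      exact List.getElem_mem h
    · left
      rw [hpc]
      simp only
      exact List.getD_eq_default _ _ (by omega)
  have hmem_pc : ∀ m P, P ∈ batch m → ∃ i, pc m i = P := by
    intro m P hP
    obtain ⟨i, hi, hPi⟩ := List.mem_iff_getElem.1 hP
    exact ⟨i, by rw [hpc]; simp only; rw [List.getD_eq_getElem _ _ hi]; exact hPi⟩
  refine ⟨pc, ?_, ?_, ?_, ?_, ?_⟩
  · intro m i
    rcases hpc_mem m i with h | h
    · rw [h]; exact piecep_empty
    · exact (chain (m+1)).2.2.1 m (pc m i) h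
  · intro m i j hij
    by_cases hj : j < (batch m).length
    · have hi : i < (batch m).length := hij.trans hj
      have hpw := (chain (m+1)).2.2.2.1 m
      rw [List.pairwise_iff_getElem] at hpw
      have := hpw i j (by rw [← hbatch] at *; exact hi) (by rw [← hbatch] at *; exact hj) hij
      rw [hpc]
      simp only
      rw [List.getD_eq_getElem _ _ hi, List.getD_eq_getElem _ _ hj]
      exact this
    · have : pc m j = ∅ := by
        rw [hpc]; simp only; exact List.getD_eq_default _ _ (by omega)
      rw [this]; exact Set.empty_inter _
  · intro m m' hmm' i j
    rcases hpc_mem m' j with h | h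
    · rw [h]; exact Set.empty_inter _
    · rcases hpc_mem m i with h2 | h2
      · rw [h2]; simp
      · -- both real: use cross property of chain (m'+1)
        have hcross := (chain (m'+1)).2.2.2.2.1 m m' hmm'
        have hbm : (chain (m'+1)).1.getD m [] = batch m := hstab (m'+1) m (by omega)
        have hbm' : (chain (m'+1)).1.getD m' [] = batch m' := rfl
        exact hcross (pc m i) (by rw [hbm]; exact h2) (pc m' j) (by rw [hbm']; exact h)
  · intro m
    refine (Set.finite_Iio (batch m).length).subset ?_
    intro i hi
    rw [Set.mem_setOf_eq] at hi
    by_contra h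
    simp only [Set.mem_Iio, not_lt] at h
    exact hi (by rw [hpc]; simp only; exact List.getD_eq_default _ _ h)
  · intro mm hmm1
    have hcov := (chain mm).2.2.2.2.2 mm hmm1 le_rfl
    refine hcov.trans ?_
    intro x hx
    obtain ⟨k, hk⟩ := Set.mem_iUnion.1 hx
    obtain ⟨P, hPk, hxP⟩ := Set.mem_iUnion₂.1 hk
    have hklen : k < mm := by
      by_contra h
      rw [Set.mem_setOf_eq, List.getD_eq_default _ _ (by rw [hchain_len]; omega)] at hPk
      exact absurd hPk (List.not_mem_nil (a := P))
    have : P ∈ batch k := by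
      rw [hbatch]
      simp only
      rw [← hstab mm k hklen]
      exact hPk
    obtain ⟨i, hi⟩ := hmem_pc k P this
    exact Set.mem_iUnion.2 ⟨k, Set.mem_iUnion.2 ⟨i, by rw [hi]; exact hxP⟩⟩

end FundamentalDomainAux

/-- existence of fundamental domains.  Let `G` be a locally compact
Hausdorff topological group with Haar measure `μ` and `Γ ≤ G` a discrete subgroup.
Then there is an open set `F ⊆ G` with: (i) `F ∩ γF = ∅` for all `γ ∈ Γ ∖ {1}`;
(ii) `Γ·cl(F) = G`; (iii) `C ∩ Γ·(cl(F) ∖ F)` has Haar measure zero for every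
compact `C ⊆ G`. -/
theorem stmt7 {G : Type*} [Group G] [TopologicalSpace G] [IsTopologicalGroup G]
    [LocallyCompactSpace G] [T2Space G] [MeasurableSpace G] [BorelSpace G]
    (μ : Measure G) [μ.IsHaarMeasure]
    (Γ : Subgroup G) (hdisc : DiscreteTopology ↥Γ) :
    ∃ F : Set G, IsOpen F ∧
      (∀ γ ∈ Γ, γ ≠ 1 → F ∩ ((γ * ·) '' F) = ∅) ∧
      (Γ : Set G) * closure F = Set.univ ∧
      (∀ C : Set G, IsCompact C → μ (C ∩ ((Γ : Set G) * (closure F \ F))) = 0) := by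
  classical
  -- a compact symmetric neighbourhood of 1
  obtain ⟨K₁, hK₁c, hK₁n⟩ := exists_compact_mem_nhds (1:G)
  set K : Set G := K₁ ∪ K₁⁻¹ with hK
  have hKc : IsCompact K := hK₁c.union hK₁c.inv
  have h1K : (1:G) ∈ interior K :=
    interior_mono Set.subset_union_left (mem_interior_iff_mem_nhds.2 hK₁n)
  have h1K' : (1:G) ∈ K := interior_subset h1K
  have hKs : K⁻¹ = K := by
    rw [hK]
    ext x
    simp only [Set.mem_inv, Set.mem_union, inv_inv]
    tauto
  -- the equivalence relation of Γ-K-blocks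
  set rel : G → G → Prop :=
    fun g x => ∃ γ ∈ (Γ : Set G), ∃ n : ℕ, ∃ h ∈ K ^ n, γ * g * h = x with hrel
  have hrel_refl : ∀ g, rel g g := by
    intro g
    exact ⟨1, Subgroup.one_mem Γ, 0, 1, by rw [pow_zero]; exact Set.mem_one.2 rfl, by simp⟩
  have hrel_symm : ∀ {g x}, rel g x → rel x g := by
    rintro g x ⟨γ, hγ, n, h, hh, rfl⟩
    refine ⟨γ⁻¹, inv_mem hγ, n, h⁻¹, ?_, by group⟩
    rw [← inv_pow_eq hKs n]
    exact Set.inv_mem_inv.2 hh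
  have hrel_trans : ∀ {g x y}, rel g x → rel x y → rel g y := by
    rintro g x y ⟨γ, hγ, n, h, hh, rfl⟩ ⟨γ', hγ', n', h', hh', rfl⟩
    refine ⟨γ' * γ, mul_mem hγ' hγ, n + n', h * h', ?_, by group⟩
    rw [pow_add]
    exact ⟨h, hh, h', hh', rfl⟩
  set sd : Setoid G := ⟨rel, fun _ => hrel_refl _, fun h => hrel_symm h,
    fun h h' => hrel_trans h h'⟩ with hsd
  set Blk : Quotient sd → Set G := fun q => {x | Quotient.mk sd x = q} with hBlk
  have hmem_blk : ∀ x, x ∈ Blk (Quotient.mk sd x) := fun x => rfl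
  have hrel_mk : ∀ {x y}, rel x y → Quotient.mk sd x = Quotient.mk sd y :=
    fun h => Quotient.sound h
  have hmk_rel : ∀ {x y}, Quotient.mk sd x = Quotient.mk sd y → rel x y :=
    fun h => Quotient.exact h
  -- the block of q contains {q.out} * K^n
  have hRK_blk : ∀ (q : Quotient sd) (n : ℕ), {q.out} * K ^ n ⊆ Blk q := by
    intro q n x hx
    obtain ⟨a, ha, h, hh, rfl⟩ := Set.mem_mul.1 hx
    rw [Set.mem_singleton_iff] at ha
    subst ha
    have : rel q.out (q.out * h) := ⟨1, Subgroup.one_mem Γ, n, h, hh, by group⟩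
    show Quotient.mk sd _ = q
    rw [← hrel_mk this, Quotient.out_eq]
  -- basic neighbourhoods staying in the same block
  have hnbhd : ∀ x : G, ∀ y ∈ (x * ·) '' interior K, Quotient.mk sd y = Quotient.mk sd x := by
    rintro x y ⟨v, hv, rfl⟩
    have hvK : v ∈ K ^ 1 := by rw [pow_one]; exact interior_subset hv
    exact (hrel_mk ⟨1, Subgroup.one_mem Γ, 1, v, hvK, by group⟩).symm
  have hblk_nbhd : ∀ x : G, (x * ·) '' interior K ∈ nhds x := by
    intro x
    have hopen : IsOpen ((x * ·) '' interior K) := (isOpenMap_mul_left x) _ isOpen_interior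
    exact hopen.mem_nhds ⟨1, h1K, mul_one x⟩
  have hblk_open : ∀ q, IsOpen (Blk q) := by
    intro q
    rw [isOpen_iff_mem_nhds]
    intro x hx
    refine Filter.mem_of_superset (hblk_nbhd x) ?_
    intro y hy
    show Quotient.mk sd y = q
    rw [hnbhd x y hy]
    exact hx
  have hblk_closed : ∀ q, IsClosed (Blk q) := by
    intro q
    rw [← isOpen_compl_iff, isOpen_iff_mem_nhds]
    intro x hx
    refine Filter.mem_of_superset (hblk_nbhd x) ?_
    intro y hy hyq
    refine hx ?_
    show Quotient.mk sd x = q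
    rw [← hnbhd x y hy]
    exact hyq
  have hblk_sat : ∀ (q : Quotient sd) (γ : G), γ ∈ (Γ : Set G) → ∀ x ∈ Blk q, γ * x ∈ Blk q := by
    intro q γ hγ x hx
    have hxr : rel x (γ * x) := ⟨γ, hγ, 0, 1, by rw [pow_zero]; exact Set.mem_one.2 rfl, by group⟩
    show Quotient.mk sd (γ * x) = q
    rw [← hrel_mk hxr]
    exact hx
  -- choose the per-block families of pieces
  have hblocks := fun q : Quotient sd => block_exists (Γ := Γ) hdisc μ hKc h1K (Quotient.out q)
  choose PC hPC1 hPC2 hPC3 hPC4 hPC5 using hblocks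
  set f : Quotient sd × ℕ × ℕ → Set G := fun j => PC j.1 j.2.1 j.2.2 with hf
  set F : Set G := ⋃ j, f j with hF
  have hfP : ∀ j, PieceP μ Γ ({(j.1).out} * K ^ (j.2.1+2)) (Xzone Γ K (j.1).out j.2.1) (f j) :=
    fun j => hPC1 j.1 j.2.1 j.2.2
  have hf_blk : ∀ j, closure (f j) ⊆ Blk j.1 := fun j => (hfP j).2.2.1.trans (hRK_blk j.1 _)
  have hf_satblk : ∀ j, (Γ : Set G) * closure (f j) ⊆ Blk j.1 := by
    rintro j x ⟨γ, hγ, c, hc, rfl⟩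
    exact hblk_sat j.1 γ hγ c (hf_blk j hc)
  -- only finitely many saturated piece closures meet a compact set
  have hMEET : ∀ C : Set G, IsCompact C →
      {j | (((Γ : Set G) * closure (f j)) ∩ C).Nonempty}.Finite := by
    intro C hC
    obtain ⟨t, htC⟩ := hC.elim_finite_subcover Blk hblk_open
      (fun x _ => Set.mem_iUnion.2 ⟨Quotient.mk sd x, hmem_blk x⟩)
    have hstage : ∀ q : Quotient sd, ∃ s₀ : ℕ,
        C ∩ Blk q ⊆ (Γ : Set G) * ({q.out} * K ^ (s₀+1)) := by
      intro q
      set Us : ℕ → Set G := fun s => ((Γ : Set G) * ({q.out} * K ^ s)) * interior K with hUs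
      have hUsopen : ∀ s, IsOpen (Us s) := fun s => IsOpen.mul_left isOpen_interior
      have hUsmono : ∀ {s s'}, s ≤ s' → Us s ⊆ Us s' := by
        intro s s' hss
        exact Set.mul_subset_mul_right
          (Set.mul_subset_mul_left (Set.mul_subset_mul_left (pow_subset_pow h1K' hss)))
      have hLq : IsCompact (C ∩ Blk q) := hC.inter_right (hblk_closed q)
      have hcover : C ∩ Blk q ⊆ ⋃ s, Us s := by
        intro x hx
        have hxr : rel q.out x := hmk_rel (by rw [Quotient.out_eq]; exact hx.2.symm ▸ rfl)
        obtain ⟨γ, hγ, nn, h, hh, rfl⟩ := hxr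
        refine Set.mem_iUnion.2 ⟨nn, ⟨γ * (q.out * h), ⟨γ, hγ, q.out * h,
          ⟨q.out, rfl, h, hh, rfl⟩, rfl⟩, 1, h1K, by group⟩⟩
      obtain ⟨ts, hts⟩ := hLq.elim_finite_subcover Us hUsopen hcover
      refine ⟨ts.sup id, ?_⟩
      intro x hx
      obtain ⟨s, hs⟩ := Set.mem_iUnion.1 (hts hx)
      obtain ⟨hsts, hxs⟩ := Set.mem_iUnion.1 hs
      have hxsup : x ∈ Us (ts.sup id) := hUsmono (Finset.le_sup (f := id) hsts) hxs
      obtain ⟨a, ha, v, hv, rfl⟩ := Set.mem_mul.1 hxsup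
      obtain ⟨γ, hγ, b, hb, rfl⟩ := Set.mem_mul.1 ha
      obtain ⟨o, ho, w, hw, rfl⟩ := Set.mem_mul.1 hb
      refine ⟨γ, hγ, o * (w * v), ⟨o, ho, w * v, ?_, rfl⟩, by group⟩
      rw [pow_succ]
      exact ⟨w, hw, v, interior_subset hv, rfl⟩
    choose s₀ hs₀ using hstage
    refine Set.Finite.subset (Set.Finite.biUnion t.finite_toSet (fun q _ =>
      Set.Finite.biUnion (Set.finite_Iio (s₀ q + 2)) (fun m _ =>
        ((hPC4 q m).image (fun i => ((q, m, i) : Quotient sd × ℕ × ℕ)))))) ?_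
    rintro ⟨q, m, i⟩ ⟨x, hx1, hx2⟩
    have hxblk : x ∈ Blk q := hf_satblk (q, m, i) hx1
    have hqt : q ∈ t := by
      obtain ⟨q', hq't, hxq'⟩ := Set.mem_iUnion₂.1 (htC hx2)
      have : q = q' := by
        rw [← hxblk]
        exact hxq'.symm ▸ rfl
      exact this ▸ hq't
    have hne : PC q m i ≠ ∅ := by
      intro h
      have : closure (f (q, m, i)) = ∅ := by
        rw [hf]; simp only; rw [h, closure_empty]
      rw [this, Set.mul_empty] at hx1
      exact hx1
    have hm : m < s₀ q + 2 := by
      by_contra hmge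
      push_neg at hmge
      have hm1 : m ≠ 0 := by omega
      have hX := (hfP (q, m, i)).2.2.2.1
      rw [Xzone, if_neg hm1] at hX
      obtain ⟨γ, hγ, b, hb, rfl⟩ := Set.mem_mul.1 hx1
      have hbX : b ∈ (Γ : Set G) * ({q.out} * K ^ (m-1)) := by
        have hxin : γ * b ∈ (Γ : Set G) * ({q.out} * K ^ (s₀ q + 1)) := hs₀ q ⟨hx2, hxblk⟩
        obtain ⟨δ, hδ, c, hc, hc'⟩ := Set.mem_mul.1 hxin
        refine ⟨γ⁻¹ * δ, mul_mem (inv_mem hγ) hδ, c, ?_, by show γ⁻¹ * δ * c = b; rw [mul_assoc, hc']; group⟩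
        obtain ⟨o, ho, w, hw, rfl⟩ := Set.mem_mul.1 hc
        exact ⟨o, ho, w, pow_subset_pow h1K' (by omega) hw, rfl⟩
      exact Set.eq_empty_iff_forall_notMem.1 hX b ⟨hb, hbX⟩
    exact Set.mem_biUnion hqt (Set.mem_biUnion (Set.mem_Iio.2 hm) ⟨i, hne, rfl⟩)
  -- local finiteness of the pieces
  have hLF : LocallyFinite f := by
    intro x
    obtain ⟨C, hCc, hCn⟩ := exists_compact_mem_nhds x
    refine ⟨C, hCn, Set.Finite.subset (hMEET C hCc) ?_⟩
    rintro j ⟨y, hy1, hy2⟩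
    exact ⟨y, ⟨1, Subgroup.one_mem Γ, y, subset_closure hy1, one_mul y⟩, hy2⟩
  have hclosureF : closure F = ⋃ j, closure (f j) := hLF.closure_iUnion
  refine ⟨F, isOpen_iUnion (fun j => (hfP j).1), ?_, ?_, ?_⟩
  · -- (i) disjointness
    intro γ hγ hγ1
    apply Set.eq_empty_iff_forall_notMem.2
    rintro x ⟨hxF, ⟨y, hyF, rfl⟩⟩
    obtain ⟨j1, hj1⟩ := Set.mem_iUnion.1 hxF
    obtain ⟨j2, hj2⟩ := Set.mem_iUnion.1 hyF
    have hq12 : j1.1 = j2.1 := by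
      have h1 : γ * y ∈ Blk j1.1 := hf_blk j1 (subset_closure hj1)
      have h2 : y ∈ Blk j2.1 := hf_blk j2 (subset_closure hj2)
      have h3 : γ * y ∈ Blk j2.1 := hblk_sat j2.1 γ hγ y h2
      rw [← h1, ← h3]
    obtain ⟨q1, m1, i1⟩ := j1
    obtain ⟨q2, m2, i2⟩ := j2
    simp only at hq12
    subst hq12
    by_cases hsame : m1 = m2 ∧ i1 = i2
    · obtain ⟨rfl, rfl⟩ := hsame
      exact Set.eq_empty_iff_forall_notMem.1 ((hfP (q1, m1, i1)).2.2.2.2.1 γ hγ hγ1)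
        (γ * y) ⟨⟨y, hj2, rfl⟩, hj1⟩
    · have hmem1 : γ * y ∈ (Γ : Set G) * closure (PC q1 m2 i2) :=
        ⟨γ, hγ, y, subset_closure hj2, rfl⟩
      have hmem2 : y ∈ (Γ : Set G) * closure (PC q1 m1 i1) :=
        ⟨γ⁻¹, inv_mem hγ, γ * y, subset_closure hj1, by group⟩
      rcases Nat.lt_trichotomy m1 m2 with h | h | h
      · exact Set.eq_empty_iff_forall_notMem.1 (hPC3 q1 m1 m2 h i1 i2) y ⟨hj2, hmem2⟩
      · subst h
        rcases Nat.lt_trichotomy i1 i2 with h' | h' | h'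
        · exact Set.eq_empty_iff_forall_notMem.1 (hPC2 q1 m1 i1 i2 h') y ⟨hj2, hmem2⟩
        · exact hsame ⟨rfl, h'⟩
        · exact Set.eq_empty_iff_forall_notMem.1 (hPC2 q1 m1 i2 i1 h') (γ * y) ⟨hj1, hmem1⟩
      · exact Set.eq_empty_iff_forall_notMem.1 (hPC3 q1 m2 m1 h i2 i1) (γ * y) ⟨hj1, hmem1⟩
  · -- (ii) covering
    apply Set.eq_univ_iff_forall.2
    intro x
    set q : Quotient sd := Quotient.mk sd x with hq
    have hxr : rel q.out x := hmk_rel (by rw [Quotient.out_eq])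
    obtain ⟨γ, hγ, nn, h, hh, heq⟩ := hxr
    have hmem : q.out * h ∈ {q.out} * K ^ (nn+1) :=
      ⟨q.out, rfl, h, pow_subset_pow h1K' (by omega) hh, rfl⟩
    have := hPC5 q (nn+1) (by omega) hmem
    obtain ⟨m, hm⟩ := Set.mem_iUnion.1 this
    obtain ⟨i, hi⟩ := Set.mem_iUnion.1 hm
    obtain ⟨δ, hδ, c, hc, hc'⟩ := Set.mem_mul.1 hi
    refine ⟨γ * δ, mul_mem hγ hδ, c, ?_,
      by show γ * δ * c = x; rw [mul_assoc, hc', ← mul_assoc, heq]⟩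
    rw [hclosureF]
    exact Set.mem_iUnion.2 ⟨(q, m, i), hc⟩
  · -- (iii) null boundary
    intro C hC
    set T := {j | (((Γ : Set G) * closure (f j)) ∩ C).Nonempty} with hT
    have hTfin : T.Finite := hMEET C hC
    have hsub : C ∩ ((Γ : Set G) * (closure F \ F)) ⊆
        ⋃ j ∈ T, ((Γ : Set G) * (closure (f j) \ f j)) ∩ C := by
      rintro x ⟨hxC, ⟨γ, hγ, b, hb, rfl⟩⟩
      have hbF : b ∈ ⋃ j, closure (f j) := by rw [← hclosureF]; exact hb.1
      obtain ⟨j, hj⟩ := Set.mem_iUnion.1 hbF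
      have hbnot : b ∉ f j := fun h => hb.2 (Set.mem_iUnion.2 ⟨j, h⟩)
      have hjT : j ∈ T := ⟨γ * b, ⟨γ, hγ, b, hj, rfl⟩, hxC⟩
      exact Set.mem_biUnion hjT ⟨⟨γ, hγ, b, ⟨hj, hbnot⟩, rfl⟩, hxC⟩
    refine le_antisymm ((measure_mono hsub).trans ?_) zero_le
    rw [(measure_biUnion_null_iff hTfin.countable).2]
    intro j _
    exact satnull hdisc (hfP j).2.1 (hfP j).2.2.2.2.2 hC
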